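/- Let E be a finite-dimensional real inner product space, ω an alternating n-linear form on E, A : E → E a linear map, and x₀ ∈ ℝ. Let f₁, …, fₙ : ℝ → E be functions, each differentiable at x₀ with derivative fⱼ′(x₀) = A(fⱼ(x₀)), and suppose that (f₁(x₀), …, fₙ(x₀)) is an orthonormal family. Define ψ(x) = ω(f₁(x), …, fₙ(x)) / √(det G(x)), where G(x) is the n×n Gram matrix with entries G(x)ᵢⱼ = ⟨fᵢ(x), fⱼ(x)⟩. Then ψ is differentiable at x₀ with derivative ψ′(x₀) = Σ_{j=1}^{n} ω(f₁(x₀), …, A(fⱼ(x₀)), …, fₙ(x₀)) − ω(f₁(x₀), …, fₙ(x₀)) · Σ_{j=1}^{n} ⟨A(fⱼ(x₀)), fⱼ(x₀)⟩, where in the first sum A(fⱼ(x₀)) replaces the j-th argument. -/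

import Mathlib

open scoped RealInnerProductSpace

theorem multilinear_continuous_of_finDim {ι : Type*} [Fintype ι] {E : ι → Type*}
    [∀ i, NormedAddCommGroup (E i)] [∀ i, NormedSpace ℝ (E i)] [∀ i, FiniteDimensional ℝ (E i)]
    {F : Type*} [NormedAddCommGroup F] [NormedSpace ℝ F]
    (m : MultilinearMap ℝ E F) : Continuous m := by
  classical
  set b := fun i => Module.finBasis ℝ (E i) with hb
  have key : ∀ v : ∀ i, E i, m v =
      ∑ k : ∀ i, Fin (Module.finrank ℝ (E i)),
        (∏ i, (b i).repr (v i) (k i)) • m (fun i => b i (k i)) := by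
    intro v
    have h1 : v = fun i => ∑ j, (b i).repr (v i) j • b i j := by
      funext i; exact ((b i).sum_repr (v i)).symm
    conv_lhs => rw [h1, MultilinearMap.map_sum]
    exact Finset.sum_congr rfl fun k _ => m.map_smul_univ _ _
  have h2 : Continuous fun v : ∀ i, E i =>
      ∑ k : ∀ i, Fin (Module.finrank ℝ (E i)),
        (∏ i, (b i).repr (v i) (k i)) • m (fun i => b i (k i)) := by
    refine continuous_finset_sum _ fun k _ => Continuous.smul ?_ continuous_const
    refine continuous_finset_prod _ fun i _ => ?_
    exact ((b i).coord (k i)).continuous_of_finiteDimensional.comp (continuous_apply i)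
  simpa [← funext key] using h2

theorem multilinear_hasDerivAt {ι : Type*} [Fintype ι] [DecidableEq ι] {E : ι → Type*}
    [∀ i, NormedAddCommGroup (E i)] [∀ i, NormedSpace ℝ (E i)] [∀ i, FiniteDimensional ℝ (E i)]
    {F : Type*} [NormedAddCommGroup F] [NormedSpace ℝ F]
    (m : MultilinearMap ℝ E F) {g : ∀ i, ℝ → E i} {g' : ∀ i, E i} {x₀ : ℝ}
    (hg : ∀ i, HasDerivAt (g i) (g' i) x₀) :
    HasDerivAt (fun x => m (fun i => g i x))
      (∑ i, m (Function.update (fun i => g i x₀) i (g' i))) x₀ := by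
  let M : ContinuousMultilinearMap ℝ E F := ⟨m, multilinear_continuous_of_finDim m⟩
  have H := HasFDerivAt.multilinear_comp M
    (g' := fun i => ContinuousLinearMap.smulRight (1 : ℝ →L[ℝ] ℝ) (g' i))
    (fun i => (hg i).hasFDerivAt)
  have H2 := H.hasDerivAt
  convert H2 using 1
  · rfl
  simp [M, ContinuousMultilinearMap.toContinuousLinearMap]

theorem stmt5 (E : Type*) [NormedAddCommGroup E] [InnerProductSpace ℝ E]
    [FiniteDimensional ℝ E] (n : ℕ)
    (ω : E [⋀^Fin n]→ₗ[ℝ] ℝ) (A : E →ₗ[ℝ] E) (x₀ : ℝ)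
    (f : Fin n → ℝ → E)
    (hf : ∀ j, HasDerivAt (f j) (A (f j x₀)) x₀)
    (horth : Orthonormal ℝ fun j => f j x₀) :
    HasDerivAt
      (fun x => ω (fun j => f j x) /
        Real.sqrt (Matrix.det (Matrix.of fun i j => ⟪f i x, f j x⟫)))
      ((∑ j, ω (Function.update (fun i => f i x₀) j (A (f j x₀)))) -
        ω (fun i => f i x₀) * ∑ j, ⟪A (f j x₀), f j x₀⟫) x₀ := by
  classical
  have hdelta : ∀ i j, ⟪f i x₀, f j x₀⟫ = if i = j then (1:ℝ) else 0 := fun i j => by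
    simpa using orthonormal_iff_ite.mp horth i j
  -- numerator
  have hg : HasDerivAt (fun x => ω (fun j => f j x))
      (∑ j, ω (Function.update (fun i => f i x₀) j (A (f j x₀)))) x₀ :=
    multilinear_hasDerivAt ω.toMultilinearMap hf
  -- Gram determinant
  set r' : Fin n → (Fin n → ℝ) :=
    fun i j => ⟪f i x₀, A (f j x₀)⟫ + ⟪A (f i x₀), f j x₀⟫ with hr'
  have hrd : ∀ i, HasDerivAt (fun x => (fun j => ⟪f i x, f j x⟫ : Fin n → ℝ)) (r' i) x₀ := by
    intro i
    rw [hasDerivAt_pi]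
    intro j
    exact (hf i).inner ℝ (hf j)
  have hh : HasDerivAt (fun x => Matrix.det (Matrix.of fun i j => ⟪f i x, f j x⟫))
      (∑ i, Matrix.detRowAlternating
        (Function.update (fun i => (fun j => ⟪f i x₀, f j x₀⟫ : Fin n → ℝ)) i (r' i))) x₀ :=
    multilinear_hasDerivAt
      (Matrix.detRowAlternating (R := ℝ) (n := Fin n)).toMultilinearMap hrd
  -- the rows at x₀ form the identity matrix
  have hrow : (fun i => (fun j => ⟪f i x₀, f j x₀⟫ : Fin n → ℝ)) = (1 : Matrix (Fin n) (Fin n) ℝ) := by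
    funext i j
    simp [Matrix.one_apply, hdelta i j]
  have hval : ∀ i, Matrix.detRowAlternating
      (Function.update (fun i => (fun j => ⟪f i x₀, f j x₀⟫ : Fin n → ℝ)) i (r' i))
      = 2 * ⟪A (f i x₀), f i x₀⟫ := by
    intro i
    rw [hrow]
    have h1 : r' i = ∑ k, r' i k • (1 : Matrix (Fin n) (Fin n) ℝ) k := by
      funext j
      simp [Matrix.one_apply, Finset.sum_apply, Pi.smul_apply, mul_ite]
    have h2 : Function.update (1 : Matrix (Fin n) (Fin n) ℝ) i (r' i)
        = Matrix.updateRow (1 : Matrix (Fin n) (Fin n) ℝ) i (r' i) := rfl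
    show Matrix.det (Function.update (1 : Matrix (Fin n) (Fin n) ℝ) i (r' i)) = _
    rw [h2, h1, Matrix.det_updateRow_sum]
    simp [hr', real_inner_comm (f i x₀) (A (f i x₀))]
    ring
  have hh' : HasDerivAt (fun x => Matrix.det (Matrix.of fun i j => ⟪f i x, f j x⟫))
      (2 * ∑ j, ⟪A (f j x₀), f j x₀⟫) x₀ := by
    convert hh using 1
    rw [Finset.mul_sum]
    exact Finset.sum_congr rfl fun i _ => (hval i).symm
  have hG1 : Matrix.det (Matrix.of fun i j => ⟪f i x₀, f j x₀⟫) = 1 := by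
    have : (Matrix.of fun i j => ⟪f i x₀, f j x₀⟫) = (1 : Matrix (Fin n) (Fin n) ℝ) := by
      ext i j; simp [Matrix.one_apply, hdelta i j]
    rw [this, Matrix.det_one]
  -- sqrt of the determinant
  have hsq : HasDerivAt (fun x => Real.sqrt (Matrix.det (Matrix.of fun i j => ⟪f i x, f j x⟫)))
      (∑ j, ⟪A (f j x₀), f j x₀⟫) x₀ := by
    have hs := (Real.hasDerivAt_sqrt (by rw [hG1]; norm_num)).comp x₀ hh'
    convert hs using 1
    · rfl
    · rfl
    · rfl
    rw [hG1]
    simp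
  -- quotient rule
  have hdiv := hg.div hsq (by rw [hG1, Real.sqrt_one]; norm_num)
  convert hdiv using 1
  · rfl
  · rfl
  · rfl
  rw [hG1, Real.sqrt_one]
  ring
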